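/- Let M be a free abelian group of finite rank and let S, S' be pure subgroups of M with S + S' pure. Define S^⊥ = {p ∈ Hom(M,ℤ) : p(s) = 0 for all s ∈ S} and similarly S'^⊥. Then S^⊥ + S'^⊥ is a pure subgroup of Hom(M,ℤ). -/

import Mathlib

/-- The annihilator `S^⊥ = {p ∈ Hom(M,ℤ) : p(s) = 0 for all s ∈ S}`. -/
def annihilator {M : Type*} [AddCommGroup M] (S : AddSubgroup M) :
    AddSubgroup (M →+ ℤ) where
  carrier := {p | ∀ s ∈ S, p s = 0}
  zero_mem' := by intro s _; rfl
  add_mem' := by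
    intro p q hp hq s hs
    simp [hp s hs, hq s hs]
  neg_mem' := by
    intro p hp s hs
    simp [hp s hs]

/-- A monoid is torsion-free if no nontrivial element has finite order. -/
def AddMonoid.IsTorsionFree (G : Type*) [AddMonoid G] : Prop :=
  ∀ g : G, g ≠ 0 → ¬IsOfFinAddOrder g

theorem AddMonoid.isTorsionFree_iff_noZeroSMulDivisors_int {G : Type*} [AddCommGroup G] :
    AddMonoid.IsTorsionFree G ↔ NoZeroSMulDivisors ℤ G := by
  constructor
  · intro h
    constructor
    intro n g hng
    by_contra hc
    push_neg at hc
    exact h g hc.2 (isOfFinAddOrder_iff_zsmul_eq_zero.mpr ⟨n, hc.1, hng⟩)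
  · intro h g hg hfin
    obtain ⟨n, hn, hng⟩ := isOfFinAddOrder_iff_zsmul_eq_zero.mp hfin
    rcases smul_eq_zero.mp hng with h1 | h1
    · exact hn h1
    · exact hg h1

theorem AddMonoid.IsTorsionFree.noZeroSMulDivisors_int {G : Type*} [AddCommGroup G]
    (h : AddMonoid.IsTorsionFree G) : NoZeroSMulDivisors ℤ G :=
  AddMonoid.isTorsionFree_iff_noZeroSMulDivisors_int.mp h

theorem annihilator_sum_pure
    (M : Type*) [AddCommGroup M] [Module.Free ℤ M] [Module.Finite ℤ M]
    (S S' : AddSubgroup M)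
    (hS : AddMonoid.IsTorsionFree (M ⧸ S))
    (hS' : AddMonoid.IsTorsionFree (M ⧸ S'))
    (hsum : AddMonoid.IsTorsionFree (M ⧸ (S ⊔ S'))) :
    AddMonoid.IsTorsionFree ((M →+ ℤ) ⧸ (annihilator S ⊔ annihilator S')) := by
  set K : AddSubgroup (M →+ ℤ) := annihilator S ⊔ annihilator S' with hK
  -- Key claim: K is saturated.
  suffices hsat : ∀ (n : ℤ) (p : M →+ ℤ), n ≠ 0 → n • p ∈ K → p ∈ K by
    rw [AddMonoid.isTorsionFree_iff_noZeroSMulDivisors_int]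
    constructor
    intro n g hng
    by_contra hcon
    push_neg at hcon
    obtain ⟨hn, hg⟩ := hcon
    obtain ⟨p, rfl⟩ := QuotientAddGroup.mk_surjective g
    apply hg
    rw [QuotientAddGroup.eq_zero_iff]
    apply hsat n p hn
    rwa [← QuotientAddGroup.mk_zsmul, QuotientAddGroup.eq_zero_iff] at hng
  intro n p hn hnp
  -- p vanishes on S ⊓ S'
  have hker : ∀ x : M, x ∈ S → x ∈ S' → p x = 0 := by
    intro x hx hx'
    obtain ⟨q1, hq1, q2, hq2, hq⟩ := AddSubgroup.mem_sup.mp hnp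
    have h1 : (n • p) x = 0 := by
      rw [← hq]
      show q1 x + q2 x = 0
      rw [hq1 x hx, hq2 x hx', add_zero]
    have h2 : n • (p x) = 0 := h1
    rcases smul_eq_zero.mp h2 with h | h
    · exact absurd h hn
    · exact h
  -- the submodule N = S + S'
  set N : Submodule ℤ M := AddSubgroup.toIntSubmodule (S ⊔ S') with hN
  -- Choose decompositions
  have hdec : ∀ x : N, ∃ s, s ∈ S ∧ ∃ s', s' ∈ S' ∧ (x : M) = s + s' := by
    intro x
    obtain ⟨s, hs, s', hs', h⟩ := AddSubgroup.mem_sup.mp x.2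
    exact ⟨s, hs, s', hs', h.symm⟩
  choose σ hσ τ hτ hστ using hdec
  -- well-definedness
  have wd : ∀ (x : N) (a b : M), a ∈ S → b ∈ S' → (x : M) = a + b → p (σ x) = p a := by
    intro x a b ha hb hab
    have hmem : σ x - a ∈ S := S.sub_mem (hσ x) ha
    have hmem' : σ x - a ∈ S' := by
      have : σ x - a = b - τ x := by
        have := (hστ x).symm.trans hab
        linear_combination (norm := abel) this
      rw [this]; exact S'.sub_mem hb (hτ x)
    have h0 := hker _ hmem hmem'
    rw [map_sub, sub_eq_zero] at h0
    exact h0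
  -- the homomorphism r on N
  have r_add : ∀ x y : N, p (σ (x + y)) = p (σ x) + p (σ y) := by
    intro x y
    have : ((x + y : N) : M) = (σ x + σ y) + (τ x + τ y) := by
      push_cast [hστ x, hστ y]
      abel
    rw [wd (x + y) (σ x + σ y) (τ x + τ y) (S.add_mem (hσ x) (hσ y))
      (S'.add_mem (hτ x) (hτ y)) this, map_add]
  let r : N →ₗ[ℤ] ℤ :=
    { toFun := fun x => p (σ x)
      map_add' := r_add
      map_smul' := by
        intro m x
        simp only [eq_intCast, Int.cast_id, smul_eq_mul]
        have : ((m • x : N) : M) = m • σ x + m • τ x := by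
          push_cast [hστ x]
          rw [smul_add]
        rw [wd (m • x) (m • σ x) (m • τ x) (S.zsmul_mem (hσ x) m)
          (S'.zsmul_mem (hτ x) m) this, map_zsmul, smul_eq_mul] }
  -- M ⧸ N is free, hence projective
  have : NoZeroSMulDivisors ℤ (M ⧸ N) := hsum.noZeroSMulDivisors_int
  have : Module.Projective ℤ (M ⧸ N) := inferInstance
  -- splitting
  obtain ⟨sec, hsec⟩ := Module.projective_lifting_property N.mkQ
    (LinearMap.id : M ⧸ N →ₗ[ℤ] M ⧸ N) N.mkQ_surjective
  have hproj : ∀ x : M, x - sec (N.mkQ x) ∈ N := by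
    intro x
    rw [← Submodule.Quotient.mk_eq_zero, ← Submodule.mkQ_apply, map_sub]
    have := congrFun (congrArg (↑·) hsec) (N.mkQ x)
    simp only [LinearMap.coe_comp, Function.comp_apply, LinearMap.id_apply] at this
    rw [this, sub_self]
  have hproj_id : ∀ x : M, x ∈ N → x - sec (N.mkQ x) = x := by
    intro x hx
    rw [Submodule.mkQ_apply, (Submodule.Quotient.mk_eq_zero N).mpr hx, map_zero, sub_zero]
  -- the extension p2
  let p2 : M →+ ℤ :=
    { toFun := fun x => r ⟨x - sec (N.mkQ x), hproj x⟩
      map_zero' := by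
        show r ⟨(0 : M) - sec (N.mkQ 0), hproj 0⟩ = 0
        have : (⟨(0 : M) - sec (N.mkQ 0), hproj 0⟩ : N) = 0 := by
          ext; simp
        rw [this, map_zero]
      map_add' := by
        intro x y
        show r _ = r _ + r _
        rw [← map_add]
        congr 1
        ext
        simp only [map_add, Submodule.coe_add]
        abel }
  have hSS' : S' ≤ S ⊔ S' := le_sup_right
  have hSS : S ≤ S ⊔ S' := le_sup_left
  -- p2 kills S'
  have hp2 : p2 ∈ annihilator S' := by
    intro b hb
    have hbN : b ∈ N := hSS' hb
    show r ⟨b - sec (N.mkQ b), hproj b⟩ = 0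
    have : (⟨b - sec (N.mkQ b), hproj b⟩ : N) = ⟨b, hbN⟩ := by
      ext; exact hproj_id b hbN
    rw [this]
    show p (σ ⟨b, hbN⟩) = 0
    rw [wd ⟨b, hbN⟩ 0 b S.zero_mem hb (by simp), map_zero]
  -- p - p2 kills S
  have hp1 : p - p2 ∈ annihilator S := by
    intro a ha
    have haN : a ∈ N := hSS ha
    show p a - p2 a = 0
    have h2 : p2 a = r ⟨a - sec (N.mkQ a), hproj a⟩ := rfl
    have : (⟨a - sec (N.mkQ a), hproj a⟩ : N) = ⟨a, haN⟩ := by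
      ext; exact hproj_id a haN
    rw [h2, this]
    have := wd ⟨a, haN⟩ a 0 ha S'.zero_mem (by simp)
    show p a - p (σ ⟨a, haN⟩) = 0
    rw [this, sub_self]
  rw [hK]
  rw [AddSubgroup.mem_sup]
  exact ⟨p - p2, hp1, p2, hp2, by abel⟩
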